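/- Let α > 0 and let f : [0,∞) → ℝ be continuously differentiable with f·e^{αξ/2} and f'·e^{αξ/2} in L²([0,∞)) and f(ξ)e^{αξ} → 0 as ξ → ∞. Then sup_{ξ ≥ 0} |f(ξ)|²e^{αξ} ≤ 2‖f e^{αξ/2}‖_{L²} · (‖f' e^{αξ/2}‖_{L²} + (α/2)‖f e^{αξ/2}‖_{L²}). -/

import Mathlib

open Real MeasureTheory Filter

theorem stmt_19 (α : ℝ) (hα : 0 < α)
    (f : ℝ → ℝ) (hf : ContDiff ℝ 1 f)
    (hfL2 : IntegrableOn (fun ξ => (f ξ) ^ 2 * Real.exp (α * ξ)) (Set.Ici 0))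
    (hf'L2 : IntegrableOn (fun ξ => (deriv f ξ) ^ 2 * Real.exp (α * ξ)) (Set.Ici 0))
    (hdecay : Tendsto (fun ξ => f ξ * Real.exp (α * ξ)) atTop (nhds 0)) :
    ∀ ξ : ℝ, 0 ≤ ξ →
      (f ξ) ^ 2 * Real.exp (α * ξ) ≤
        2 * Real.sqrt (∫ t in Set.Ici (0 : ℝ), (f t) ^ 2 * Real.exp (α * t)) *
          (Real.sqrt (∫ t in Set.Ici (0 : ℝ), (deriv f t) ^ 2 * Real.exp (α * t)) +
            α / 2 * Real.sqrt (∫ t in Set.Ici (0 : ℝ), (f t) ^ 2 * Real.exp (α * t))) := by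
  intro ξ hξ
  have hfc : Continuous f := hf.continuous
  have hf'c : Continuous (deriv f) := hf.continuous_deriv le_rfl
  have hfd : ∀ x : ℝ, HasDerivAt f (deriv f x) x := fun x =>
    ((hf.differentiable one_ne_zero) x).hasDerivAt
  set F : ℝ → ℝ := fun t => |f t| * Real.exp (α * t / 2) with hF
  set G : ℝ → ℝ := fun t => |deriv f t| * Real.exp (α * t / 2) with hG
  have he : ∀ t : ℝ, Real.exp (α * t / 2) ^ 2 = Real.exp (α * t) := fun t => by
    rw [← Real.exp_nat_mul]; congr 1; push_cast; ring
  have hFsq : ∀ t, F t ^ 2 = f t ^ 2 * Real.exp (α * t) := by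
    intro t
    show (|f t| * Real.exp (α * t / 2)) ^ 2 = _
    rw [mul_pow, sq_abs, he]
  have hGsq : ∀ t, G t ^ 2 = deriv f t ^ 2 * Real.exp (α * t) := by
    intro t
    show (|deriv f t| * Real.exp (α * t / 2)) ^ 2 = _
    rw [mul_pow, sq_abs, he]
  have hFGeq : ∀ t, F t * G t = |f t| * |deriv f t| * Real.exp (α * t) := by
    intro t
    show |f t| * Real.exp (α * t / 2) * (|deriv f t| * Real.exp (α * t / 2)) = _
    rw [← he t]; ring
  have hFc : Continuous F := (hfc.abs).mul (Real.continuous_exp.comp (by continuity))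
  have hGc : Continuous G := (hf'c.abs).mul (Real.continuous_exp.comp (by continuity))
  have hFnn : ∀ t, 0 ≤ F t := fun t => mul_nonneg (abs_nonneg _) (Real.exp_pos _).le
  have hGnn : ∀ t, 0 ≤ G t := fun t => mul_nonneg (abs_nonneg _) (Real.exp_pos _).le
  -- integrability of F*G on Ici 0
  have hFG : IntegrableOn (fun t => F t * G t) (Set.Ici 0) := by
    refine Integrable.mono' (hfL2.add hf'L2) ((hFc.mul hGc).aestronglyMeasurable) ?_
    refine Filter.Eventually.of_forall fun t => ?_
    have h1 : F t * G t ≤ F t ^ 2 + G t ^ 2 := by nlinarith [hFnn t, hGnn t, sq_nonneg (F t - G t)]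
    rw [Real.norm_of_nonneg (mul_nonneg (hFnn t) (hGnn t))]
    calc F t * G t ≤ F t ^ 2 + G t ^ 2 := h1
      _ = _ := by simp only [Pi.add_apply]; rw [hFsq t, hGsq t]
  -- the majorant
  set H : ℝ → ℝ := fun t => 2 * (F t * G t) + α * (f t ^ 2 * Real.exp (α * t)) with hH
  have hHint : IntegrableOn H (Set.Ici 0) := (hFG.const_mul 2).add (hfL2.const_mul α)
  have hHnn : ∀ t, 0 ≤ H t := fun t => by
    have h1 := mul_nonneg (hFnn t) (hGnn t)
    have h2 : 0 ≤ f t ^ 2 * Real.exp (α * t) := by positivity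
    have h3 := mul_nonneg hα.le h2
    show 0 ≤ 2 * (F t * G t) + α * (f t ^ 2 * Real.exp (α * t))
    linarith
  -- derivative of g
  set g' : ℝ → ℝ := fun x => (2 * f x * deriv f x + α * f x ^ 2) * Real.exp (α * x) with hg'
  have hgderiv : ∀ x : ℝ, HasDerivAt (fun t => f t ^ 2 * Real.exp (α * t)) (g' x) x := by
    intro x
    have h1 : HasDerivAt (fun t => f t ^ 2) (2 * f x * deriv f x) x := by
      have := (hfd x).fun_pow 2
      simpa [mul_comm, mul_assoc] using this
    have h2 : HasDerivAt (fun t : ℝ => Real.exp (α * t)) (Real.exp (α * x) * α) x :=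
      HasDerivAt.exp (by simpa using (hasDerivAt_id x).const_mul α)
    have := h1.fun_mul h2
    refine this.congr_deriv ?_
    rw [hg']; ring
  -- pointwise bounds on g'
  have habs : ∀ x, -g' x ≤ H x ∧ |g' x| ≤ H x := by
    intro x
    have hE : (0:ℝ) < Real.exp (α * x) := Real.exp_pos _
    have h1 : |2 * f x * deriv f x + α * f x ^ 2| ≤ 2 * (|f x| * |deriv f x|) + α * f x ^ 2 := by
      calc |2 * f x * deriv f x + α * f x ^ 2|
          ≤ |2 * f x * deriv f x| + |α * f x ^ 2| := abs_add_le _ _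
        _ ≤ 2 * (|f x| * |deriv f x|) + α * f x ^ 2 := by
            rw [abs_mul, abs_mul, abs_two, abs_mul, abs_of_nonneg hα.le,
              abs_of_nonneg (sq_nonneg (f x))]
            ring_nf
            exact le_refl _
    have h2 : |g' x| ≤ H x := by
      show |(2 * f x * deriv f x + α * f x ^ 2) * Real.exp (α * x)|
        ≤ 2 * (F x * G x) + α * (f x ^ 2 * Real.exp (α * x))
      rw [abs_mul, abs_of_nonneg hE.le, hFGeq]
      calc |2 * f x * deriv f x + α * f x ^ 2| * Real.exp (α * x)
          ≤ (2 * (|f x| * |deriv f x|) + α * f x ^ 2) * Real.exp (α * x) := by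
            exact mul_le_mul_of_nonneg_right h1 hE.le
        _ = 2 * (|f x| * |deriv f x| * Real.exp (α * x)) + α * (f x ^ 2 * Real.exp (α * x)) := by
            ring
    exact ⟨(neg_le_abs _).trans h2, h2⟩
  -- tendsto facts
  have hlin : Tendsto (fun x : ℝ => α * x) atTop atTop :=
    Tendsto.const_mul_atTop hα tendsto_id
  have hexp : Tendsto (fun x : ℝ => Real.exp (-(α * x))) atTop (nhds 0) :=
    Real.tendsto_exp_atBot.comp (tendsto_neg_atTop_atBot.comp hlin)
  have hf0 : Tendsto f atTop (nhds 0) := by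
    have := hdecay.mul hexp
    simp only [mul_zero] at this
    refine this.congr fun x => ?_
    rw [mul_assoc, ← Real.exp_add]
    simp
  have hg0 : Tendsto (fun t => f t ^ 2 * Real.exp (α * t)) atTop (nhds 0) := by
    have := hdecay.mul hf0
    simp only [mul_zero] at this
    refine this.congr fun x => ?_
    ring
  -- integrability of g' on Ioi ξ
  have hIci : Set.Ioi ξ ⊆ Set.Ici (0:ℝ) := fun x hx => le_of_lt (lt_of_le_of_lt hξ hx)
  have hg'int : IntegrableOn g' (Set.Ioi ξ) := by
    refine Integrable.mono' ((hHint.mono_set hIci)) ?_ ?_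
    · exact Continuous.aestronglyMeasurable (by
        rw [hg']
        exact (((continuous_const.mul hfc).mul hf'c).add
          (continuous_const.mul (hfc.pow 2))).mul
          (Real.continuous_exp.comp (by continuity)))
    · exact Filter.Eventually.of_forall fun x => by
        rw [Real.norm_eq_abs]; exact (habs x).2
  -- FTC
  have hFTC : ∫ x in Set.Ioi ξ, g' x = 0 - f ξ ^ 2 * Real.exp (α * ξ) :=
    integral_Ioi_of_hasDerivAt_of_tendsto (hgderiv ξ).continuousAt.continuousWithinAt
      (fun x _ => hgderiv x) hg'int hg0
  have hkey : f ξ ^ 2 * Real.exp (α * ξ) = ∫ x in Set.Ioi ξ, (-g' x) := by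
    rw [integral_neg, hFTC]; ring
  -- chain of inequalities
  have step1 : f ξ ^ 2 * Real.exp (α * ξ) ≤ ∫ x in Set.Ioi ξ, H x := by
    rw [hkey]
    exact setIntegral_mono hg'int.neg (hHint.mono_set hIci) fun x => (habs x).1
  have step2 : ∫ x in Set.Ioi ξ, H x ≤ ∫ x in Set.Ici 0, H x := by
    apply setIntegral_mono_set hHint
    · exact Filter.Eventually.of_forall fun x => hHnn x
    · exact Filter.Eventually.of_forall hIci
  -- Hölder
  set A := ∫ t in Set.Ici (0:ℝ), f t ^ 2 * Real.exp (α * t) with hA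
  set B := ∫ t in Set.Ici (0:ℝ), deriv f t ^ 2 * Real.exp (α * t) with hB
  have hAnn : 0 ≤ A := setIntegral_nonneg measurableSet_Ici fun t _ => by positivity
  have hBnn : 0 ≤ B := setIntegral_nonneg measurableSet_Ici fun t _ => by positivity
  have hpq : Real.HolderConjugate 2 2 := ⟨by norm_num, by norm_num, by norm_num⟩
  have h2 : (ENNReal.ofReal 2) = (2 : ENNReal) := by norm_num
  have hFmem : MemLp F (ENNReal.ofReal 2) (volume.restrict (Set.Ici 0)) := by
    rw [h2]
    refine (memLp_two_iff_integrable_sq hFc.aestronglyMeasurable).mpr ?_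
    exact hfL2.congr (Filter.Eventually.of_forall fun t => (hFsq t).symm)
  have hGmem : MemLp G (ENNReal.ofReal 2) (volume.restrict (Set.Ici 0)) := by
    rw [h2]
    refine (memLp_two_iff_integrable_sq hGc.aestronglyMeasurable).mpr ?_
    exact hf'L2.congr (Filter.Eventually.of_forall fun t => (hGsq t).symm)
  have holder := integral_mul_le_Lp_mul_Lq_of_nonneg hpq
    (Filter.Eventually.of_forall hFnn) (Filter.Eventually.of_forall hGnn) hFmem hGmem
  have hrw1 : (∫ a in Set.Ici (0:ℝ), F a ^ (2:ℝ)) = A := by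
    rw [hA]
    refine setIntegral_congr_fun measurableSet_Ici fun t _ => ?_
    rw [show F t ^ (2:ℝ) = F t ^ (2:ℕ) by rw [← Real.rpow_natCast]; norm_num, hFsq]
  have hrw2 : (∫ a in Set.Ici (0:ℝ), G a ^ (2:ℝ)) = B := by
    rw [hB]
    refine setIntegral_congr_fun measurableSet_Ici fun t _ => ?_
    rw [show G t ^ (2:ℝ) = G t ^ (2:ℕ) by rw [← Real.rpow_natCast]; norm_num, hGsq]
  have holder2 : (∫ a in Set.Ici (0:ℝ), F a * G a) ≤ Real.sqrt A * Real.sqrt B := by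
    calc (∫ a in Set.Ici (0:ℝ), F a * G a)
        ≤ (∫ a in Set.Ici (0:ℝ), F a ^ (2:ℝ)) ^ (1/2:ℝ) *
            (∫ a in Set.Ici (0:ℝ), G a ^ (2:ℝ)) ^ (1/2:ℝ) := holder
      _ = Real.sqrt A * Real.sqrt B := by
          rw [hrw1, hrw2, ← Real.sqrt_eq_rpow, ← Real.sqrt_eq_rpow]
  have step3 : (∫ x in Set.Ici (0:ℝ), H x) ≤ 2 * (Real.sqrt A * Real.sqrt B) + α * A := by
    rw [hH]
    rw [integral_add (hFG.const_mul 2) (hfL2.const_mul α), integral_const_mul, integral_const_mul]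
    have := holder2
    nlinarith [hα.le]
  have hfinal : f ξ ^ 2 * Real.exp (α * ξ) ≤ 2 * (Real.sqrt A * Real.sqrt B) + α * A :=
    le_trans step1 (le_trans step2 step3)
  calc f ξ ^ 2 * Real.exp (α * ξ) ≤ 2 * (Real.sqrt A * Real.sqrt B) + α * A := hfinal
    _ = 2 * Real.sqrt A * (Real.sqrt B + α / 2 * Real.sqrt A) := by
        have h := Real.mul_self_sqrt hAnn
        linear_combination (-α) * h
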